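/- Let H, φ, E₀, μ be as above, with e^{-tH} positivity improving. Then for every t > 0 and every u ∈ L^∞(ℝⁿ, ℝ) nonnegative a.e., one has 0 ≤ e^{-tH}(φu)(x) ≤ e^{-tE₀}‖u‖_∞ · φ(x) almost everywhere; equivalently ‖e^{-tH̃}u‖_∞ ≤ e^{-tE₀}‖u‖_∞. -/

import Mathlib

open Real MeasureTheory Filter
open scoped ENNReal

theorem stmt_11 (n : ℕ) (hn : 1 ≤ n)
    (T : ℝ → ((Fin n → ℝ) → ℝ) → ((Fin n → ℝ) → ℝ)) -- T t = e^{-tH}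
    (φ : (Fin n → ℝ) → ℝ) (E₀ : ℝ) (hE₀ : 0 ≤ E₀)
    (hφmeas : Measurable φ) (hφpos : ∀ x, 0 < φ x)
    (hφL2 : MemLp φ 2 (volume : Measure (Fin n → ℝ)))
    -- linearity of e^{-tH}
    (hlin : ∀ t > 0, ∀ f g : (Fin n → ℝ) → ℝ,
      T t (f - g) = T t f - T t g)
    -- e^{-tH} is positivity improving
    (himp : ∀ t > 0, ∀ f : (Fin n → ℝ) → ℝ, (∀ᵐ x, 0 ≤ f x) →
      ¬ (f =ᵐ[volume] 0) → ∀ᵐ x, 0 < T t f x)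
    -- Hφ = E₀ φ, i.e. e^{-tH} φ = e^{-t E₀} φ
    (hground : ∀ t > 0, T t φ =ᵐ[volume] fun x => Real.exp (-t * E₀) * φ x) :
    ∀ t > 0, ∀ u : (Fin n → ℝ) → ℝ,
      eLpNorm u ⊤ (volume : Measure (Fin n → ℝ)) < ⊤ → (∀ᵐ x, 0 ≤ u x) →
      ∀ᵐ x, 0 ≤ T t (fun y => φ y * u y) x ∧
        T t (fun y => φ y * u y) x
          ≤ Real.exp (-t * E₀) * (eLpNorm u ⊤ (volume : Measure (Fin n → ℝ))).toReal * φ x := by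
  intro t ht u hufin hunn
  set C := Real.exp (-t * E₀) with hC
  have hCpos : 0 < C := Real.exp_pos _
  -- T t 0 = 0
  have h0 : T t 0 = 0 := by
    have h := hlin t ht 0 0
    rw [sub_self] at h
    rw [h, sub_self]
  -- additivity
  have hadd : ∀ f g : (Fin n → ℝ) → ℝ, T t (f + g) = T t f + T t g := by
    intro f g
    have e : f + g = f - (0 - g) := by funext x; simp
    rw [e, hlin t ht, hlin t ht, h0]
    abel
  -- natural scaling
  have hnat : ∀ k : ℕ, ∀ f : (Fin n → ℝ) → ℝ,
      T t (fun x => (k : ℝ) * f x) = fun x => (k : ℝ) * T t f x := by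
    intro k
    induction k with
    | zero =>
      intro f
      have e : (fun x => ((0 : ℕ) : ℝ) * f x) = (0 : (Fin n → ℝ) → ℝ) := by
        funext x; simp
      rw [e, h0]; funext x; simp
    | succ k ih =>
      intro f
      have e : (fun x => ((k + 1 : ℕ) : ℝ) * f x) = (fun x => (k : ℝ) * f x) + f := by
        funext x; simp [Pi.add_apply]; push_cast; ring
      rw [e, hadd, ih]
      funext x; simp [Pi.add_apply]; push_cast; ring
  -- rational scaling
  have hrat : ∀ q : ℚ, 0 ≤ q → ∀ f : (Fin n → ℝ) → ℝ,
      T t (fun x => (q : ℝ) * f x) = fun x => (q : ℝ) * T t f x := by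
    intro q hq f
    have hbne : ((q.den : ℝ)) ≠ 0 := Nat.cast_ne_zero.mpr q.den_pos.ne'
    have hqb : (q : ℝ) * (q.den : ℝ) = ((q.num.toNat : ℕ) : ℝ) := by
      have h1 : ((q.num.toNat : ℕ) : ℝ) = ((q.num : ℤ) : ℝ) := by
        norm_cast
        exact Int.toNat_of_nonneg (Rat.num_nonneg.mpr hq)
      rw [h1, Rat.cast_def]
      field_simp
    have key : (fun x => (q.den : ℝ) * ((q : ℝ) * f x))
        = fun x => ((q.num.toNat : ℕ) : ℝ) * f x := by
      funext x; rw [← hqb]; ring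
    have h1 := hnat q.den (fun x => (q : ℝ) * f x)
    rw [key] at h1
    have h1' := (hnat q.num.toNat f).symm.trans h1
    funext x
    have h3 := (congrFun h1' x).symm
    have h4 : (q.den : ℝ) * T t (fun x => (q : ℝ) * f x) x
        = (q.den : ℝ) * ((q : ℝ) * T t f x) := by
      rw [h3, ← hqb]; ring
    exact mul_left_cancel₀ hbne h4
  -- φ is not a.e. zero
  have hφne : ¬ (φ =ᵐ[volume] 0) := by
    intro h
    have hfalse : ∀ᵐ x : Fin n → ℝ, False :=
      h.mono fun x hx => (hφpos x).ne' (by simpa using hx)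
    have : (volume : Measure (Fin n → ℝ)) = 0 := by
      simpa [ae_eq_bot] using eventually_false_iff_eq_bot.mp hfalse
    have : (0 : ℝ≥0∞) < volume (Set.univ : Set (Fin n → ℝ)) :=
      isOpen_univ.measure_pos volume ⟨0, trivial⟩
    simp_all
  -- T kills a.e.-zero functions
  have hzero : ∀ h : (Fin n → ℝ) → ℝ, h =ᵐ[volume] 0 → T t h =ᵐ[volume] 0 := by
    intro h hh
    have hkey : ∀ k : ℕ, ∀ᵐ x, 0 < C * φ x + (k : ℝ) * T t h x ∧
        0 < C * φ x - (k : ℝ) * T t h x := by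
      intro k
      have hkh : (fun x => (k : ℝ) * h x) =ᵐ[volume] 0 :=
        hh.mono fun x hx => by simp [Pi.zero_apply] at hx ⊢; simp [hx]
      have hp : ∀ᵐ x, 0 ≤ (φ + fun x => (k : ℝ) * h x) x :=
        hkh.mono fun x hx => by
          have hx' : (k : ℝ) * h x = 0 := hx
          simp only [Pi.add_apply, hx', add_zero]
          exact (hφpos x).le
      have hpn : ¬ ((φ + fun x => (k : ℝ) * h x) =ᵐ[volume] 0) := by
        intro hc
        apply hφne
        have : φ =ᵐ[volume] (φ + fun x => (k : ℝ) * h x) :=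
          hkh.mono fun x hx => by
            have hx' : (k : ℝ) * h x = 0 := hx
            simp only [Pi.add_apply, hx', add_zero]
        exact this.trans hc
      have hm : ∀ᵐ x, 0 ≤ (φ - fun x => (k : ℝ) * h x) x :=
        hkh.mono fun x hx => by
          have hx' : (k : ℝ) * h x = 0 := hx
          simp only [Pi.sub_apply, hx', sub_zero]
          exact (hφpos x).le
      have hmn : ¬ ((φ - fun x => (k : ℝ) * h x) =ᵐ[volume] 0) := by
        intro hc
        apply hφne
        have : φ =ᵐ[volume] (φ - fun x => (k : ℝ) * h x) :=
          hkh.mono fun x hx => by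
            have hx' : (k : ℝ) * h x = 0 := hx
            simp only [Pi.sub_apply, hx', sub_zero]
        exact this.trans hc
      have h1 := himp t ht _ hp hpn
      have h2 := himp t ht _ hm hmn
      have e1 : T t (φ + fun x => (k : ℝ) * h x) = T t φ + fun x => (k : ℝ) * T t h x := by
        rw [hadd, hnat]
      have e2 : T t (φ - fun x => (k : ℝ) * h x) = T t φ - fun x => (k : ℝ) * T t h x := by
        rw [hlin t ht, hnat]
      rw [e1] at h1; rw [e2] at h2
      filter_upwards [h1, h2, hground t ht] with x hx1 hx2 hxg
      simp only [Pi.add_apply, Pi.sub_apply] at hx1 hx2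
      rw [hxg] at hx1 hx2
      rw [hC]
      exact ⟨hx1, hx2⟩
    have hall : ∀ᵐ x, ∀ k : ℕ, 0 < C * φ x + (k : ℝ) * T t h x ∧
        0 < C * φ x - (k : ℝ) * T t h x := (ae_all_iff).mpr hkey
    filter_upwards [hall] with x hx
    simp only [Pi.zero_apply]
    by_contra hne
    obtain ⟨k, hk⟩ := exists_nat_gt (C * φ x / |T t h x|)
    have habs : (0:ℝ) < |T t h x| := abs_pos.mpr hne
    have hklt : C * φ x < (k : ℝ) * |T t h x| := by
      rw [div_lt_iff₀ habs] at hk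
      linarith
    rcases abs_cases (T t h x) with ⟨he, _⟩ | ⟨he, _⟩
    · have := (hx k).2
      rw [he] at hklt
      linarith
    · have := (hx k).1
      rw [he] at hklt
      linarith
  -- setup
  set M := (eLpNorm u ⊤ (volume : Measure (Fin n → ℝ))).toReal with hM
  have hMnn : 0 ≤ M := ENNReal.toReal_nonneg
  set g : (Fin n → ℝ) → ℝ := fun y => φ y * u y with hg
  have hgnn : ∀ᵐ x, 0 ≤ g x := hunn.mono fun x hx => mul_nonneg (hφpos x).le hx
  have huM : ∀ᵐ x, u x ≤ M := by
    have h1 : ∀ᵐ x, (‖u x‖₊ : ℝ≥0∞) ≤ eLpNorm u ⊤ volume := by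
      rw [eLpNorm_exponent_top]
      exact ae_le_eLpNormEssSup
    filter_upwards [h1] with x hx
    have : ‖u x‖ ≤ M := by
      rw [hM]
      have := ENNReal.toReal_mono hufin.ne hx
      simpa using this
    calc u x ≤ |u x| := le_abs_self _
    _ = ‖u x‖ := (Real.norm_eq_abs _).symm
    _ ≤ M := this
  -- lower bound
  have hlow : ∀ᵐ x, 0 ≤ T t g x := by
    by_cases hg0 : g =ᵐ[volume] 0
    · exact (hzero g hg0).mono fun x hx => by simp [hx]
    · exact (himp t ht g hgnn hg0).mono fun x hx => hx.le
  -- upper bound for each rational q ≥ M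
  have hupq : ∀ q : ℚ, ∀ᵐ x, M ≤ (q : ℝ) → T t g x ≤ C * (q : ℝ) * φ x := by
    intro q
    by_cases hMq : M ≤ (q : ℝ)
    · have hq0 : 0 ≤ q := by
        have : (0:ℝ) ≤ (q:ℝ) := le_trans hMnn hMq
        exact_mod_cast this
      set f₂ : (Fin n → ℝ) → ℝ := (fun x => (q : ℝ) * φ x) - g with hf₂
      have hf₂nn : ∀ᵐ x, 0 ≤ f₂ x := by
        filter_upwards [hunn, huM] with x hx1 hx2
        have : φ x * u x ≤ (q : ℝ) * φ x := by
          calc φ x * u x ≤ φ x * M := by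
                exact mul_le_mul_of_nonneg_left hx2 (hφpos x).le
          _ ≤ φ x * (q : ℝ) := mul_le_mul_of_nonneg_left hMq (hφpos x).le
          _ = (q : ℝ) * φ x := mul_comm _ _
        simp [hf₂, Pi.sub_apply, hg]
        linarith
      have eT : T t f₂ = (fun x => (q : ℝ) * T t φ x) - T t g := by
        rw [hf₂, hlin t ht, hrat q hq0]
      by_cases hz : f₂ =ᵐ[volume] 0
      · have := hzero f₂ hz
        rw [eT] at this
        filter_upwards [this, hground t ht] with x hx hxg _
        simp [Pi.sub_apply, Pi.zero_apply] at hx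
        rw [hxg] at hx
        nlinarith [hx]
      · have := himp t ht f₂ hf₂nn hz
        rw [eT] at this
        filter_upwards [this, hground t ht] with x hx hxg _
        simp [Pi.sub_apply] at hx
        rw [hxg] at hx
        nlinarith [hx]
    · filter_upwards with x hx
      exact absurd hx hMq
  have hup : ∀ᵐ x, T t g x ≤ C * M * φ x := by
    have hall := (ae_all_iff).mpr hupq
    filter_upwards [hall] with x hx
    by_contra hcon
    push_neg at hcon
    have hφx := hφpos x
    have hCφ : 0 < C * φ x := mul_pos hCpos hφx
    set ε := T t g x - C * M * φ x with hε
    have hεpos : 0 < ε := by simp [hε]; linarith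
    obtain ⟨q, hq1, hq2⟩ := exists_rat_btwn (lt_add_of_pos_right M (div_pos hεpos hCφ))
    have := hx q hq1.le
    have : T t g x ≤ C * (q : ℝ) * φ x := this
    have hq2' : C * (q : ℝ) * φ x < C * (M + ε / (C * φ x)) * φ x := by
      have := mul_lt_mul_of_pos_left hq2 hCpos
      nlinarith [hφx]
    have heq : C * (M + ε / (C * φ x)) * φ x = C * M * φ x + ε := by
      field_simp
    rw [heq] at hq2'
    simp [hε] at hq2'
    linarith
  filter_upwards [hlow, hup] with x h1 h2
  exact ⟨h1, h2⟩
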